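/- Let X ∈ ℝ^{n×p} be a matrix each of whose columns has unit Euclidean norm, and let w ∈ ℝ^p. Then ‖w‖₂ ≤ ‖X·Diag(w)‖_* ≤ ‖w‖₁, i.e. the trace Lasso penalty of w interpolates between the ℓ₂ norm and the ℓ₁ norm of w. -/

import Mathlib

open Matrix

/-- Euclidean norm of a vector. -/
noncomputable def euclNorm {n : Type*} [Fintype n] (x : n → ℝ) : ℝ :=
  Real.sqrt (∑ i, x i ^ 2)

/-- Frobenius norm of a matrix. -/
noncomputable def frob {m n : Type*} [Fintype m] [Fintype n] (A : Matrix m n ℝ) : ℝ :=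
  Real.sqrt (∑ i, ∑ j, A i j ^ 2)

/-- Frobenius inner product ⟨A, B⟩_F = tr(Aᵀ B). -/
noncomputable def frobInner {m n : Type*} [Fintype m] [Fintype n]
    (A B : Matrix m n ℝ) : ℝ :=
  (Aᵀ * B).trace

/-- The ℓ₂ → ℓ₂ operator (spectral) norm of a matrix. -/
noncomputable def opNorm {m n : Type*} [Fintype m] [Fintype n] [DecidableEq n]
    (M : Matrix m n ℝ) : ℝ :=
  ‖LinearMap.toContinuousLinearMap (Matrix.toEuclideanLin M)‖

/-- The nuclear norm, defined by duality with the operator norm: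
‖A‖_* = sup { ⟨M, A⟩_F : ‖M‖_op ≤ 1 }. -/
noncomputable def nuclearNorm {m n : Type*} [Fintype m] [Fintype n] [DecidableEq n]
    (A : Matrix m n ℝ) : ℝ :=
  sSup {c : ℝ | ∃ M : Matrix m n ℝ, opNorm M ≤ 1 ∧ c = frobInner M A}

/-- The operator 𝒜_X : ℝ^{p×r} → ℝ^{n×(pr)}, W ↦ (X·Diag(W_{·1}), …, X·Diag(W_{·r})),
where the column ((i-1)p + j) of the concatenation is indexed by the pair (i, j). -/
noncomputable def traceLassoOp {n p r : ℕ} (X : Matrix (Fin n) (Fin p) ℝ)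
    (W : Matrix (Fin p) (Fin r) ℝ) : Matrix (Fin n) (Fin r × Fin p) ℝ :=
  fun a ij => X a ij.2 * W ij.2 ij.1

section aux
variable {m n : Type*} [Fintype m] [Fintype n]

lemma abs_sum_mul_le (x y : n → ℝ) : |∑ i, x i * y i| ≤ euclNorm x * euclNorm y := by
  have h := Finset.sum_mul_sq_le_sq_mul_sq Finset.univ x y
  calc |∑ i, x i * y i| = Real.sqrt ((∑ i, x i * y i)^2) := (Real.sqrt_sq_eq_abs _).symm
    _ ≤ Real.sqrt ((∑ i, x i ^2) * ∑ i, y i ^2) := Real.sqrt_le_sqrt h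
    _ = euclNorm x * euclNorm y := by
        rw [euclNorm, euclNorm, Real.sqrt_mul (by positivity)]

lemma enorm_eq_norm (y : EuclideanSpace ℝ n) : ‖y‖ = euclNorm (fun i => y i) := by
  rw [EuclideanSpace.norm_eq, euclNorm]
  congr 1
  exact Finset.sum_congr rfl fun i _ => by rw [Real.norm_eq_abs, sq_abs]

lemma toEuc_apply [DecidableEq n] (M : Matrix m n ℝ) (x : EuclideanSpace ℝ n) (i : m) :
    (LinearMap.toContinuousLinearMap (Matrix.toEuclideanLin M) x) i = ∑ j, M i j * x j := by
  change (M *ᵥ (fun j => x j)) i = _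
  simp [Matrix.mulVec, dotProduct]

lemma opNorm_le_frob [DecidableEq n] (M : Matrix m n ℝ) : opNorm M ≤ frob M := by
  apply ContinuousLinearMap.opNorm_le_bound _ (Real.sqrt_nonneg _)
  intro x
  have key : ∑ i, (∑ j, M i j * x j)^2 ≤ (∑ i, ∑ j, M i j ^2) * (∑ j, (x j) ^2) := by
    rw [Finset.sum_mul]
    exact Finset.sum_le_sum fun i _ => Finset.sum_mul_sq_le_sq_mul_sq _ _ _
  calc ‖LinearMap.toContinuousLinearMap (Matrix.toEuclideanLin M) x‖
      = Real.sqrt (∑ i, (∑ j, M i j * x j)^2) := by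
        rw [enorm_eq_norm, euclNorm]
        simp only [toEuc_apply]
    _ ≤ Real.sqrt ((∑ i, ∑ j, M i j ^2) * (∑ j, (x j) ^2)) := Real.sqrt_le_sqrt key
    _ = frob M * ‖x‖ := by
        rw [Real.sqrt_mul (by positivity), frob, enorm_eq_norm x, euclNorm]

lemma col_enorm_le_opNorm [DecidableEq n] (M : Matrix m n ℝ) (j : n) :
    euclNorm (fun i => M i j) ≤ opNorm M := by
  have h := (LinearMap.toContinuousLinearMap (Matrix.toEuclideanLin M)).le_opNorm
      (EuclideanSpace.single j (1:ℝ))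
  rw [EuclideanSpace.norm_single, norm_one, mul_one] at h
  refine le_trans (le_of_eq ?_) h
  rw [enorm_eq_norm]
  congr 1
  funext i
  rw [toEuc_apply]
  simp [EuclideanSpace.single_apply, mul_comm]

lemma frob_smul {m n : Type*} [Fintype m] [Fintype n] (c : ℝ) (A : Matrix m n ℝ) :
    frob (c • A) = |c| * frob A := by
  rw [frob, frob]
  have h : ∑ i, ∑ j, (c • A) i j ^2 = c^2 * ∑ i, ∑ j, A i j ^2 := by
    rw [Finset.mul_sum]
    refine Finset.sum_congr rfl fun i _ => ?_
    rw [Finset.mul_sum]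
    refine Finset.sum_congr rfl fun j _ => ?_
    rw [Matrix.smul_apply, smul_eq_mul]; ring
  rw [h, Real.sqrt_mul (sq_nonneg c), Real.sqrt_sq_eq_abs]

lemma frobInner_eq (M A : Matrix m n ℝ) : frobInner M A = ∑ j, ∑ i, M i j * A i j := by
  simp [frobInner, Matrix.trace, Matrix.diag, Matrix.mul_apply]

end aux

/-- If each column of X has unit norm, then
‖w‖₂ ≤ ‖X·Diag(w)‖_* ≤ ‖w‖₁. -/

theorem stmt_10 {n p : ℕ} (X : Matrix (Fin n) (Fin p) ℝ) (w : Fin p → ℝ)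
    (hX : ∀ j : Fin p, euclNorm (fun a => X a j) = 1) :
    euclNorm w ≤ nuclearNorm (X * Matrix.diagonal w) ∧
      nuclearNorm (X * Matrix.diagonal w) ≤ ∑ j : Fin p, |w j| := by
  set A := X * Matrix.diagonal w with hA
  have hAij : ∀ i j, A i j = X i j * w j := by
    intro i j; rw [hA, Matrix.mul_diagonal]
  have hXcol : ∀ j : Fin p, ∑ i, X i j ^ 2 = 1 := by
    intro j
    have h := hX j
    rw [euclNorm] at h
    have h0 : (0:ℝ) ≤ ∑ i, X i j ^ 2 := by positivity
    nlinarith [Real.sq_sqrt h0, h]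
  -- every element of the dual set is ≤ ∑ |w j|
  have hub : ∀ c ∈ {c : ℝ | ∃ M : Matrix (Fin n) (Fin p) ℝ, opNorm M ≤ 1 ∧ c = frobInner M A},
      c ≤ ∑ j : Fin p, |w j| := by
    rintro c ⟨M, hM, rfl⟩
    rw [frobInner_eq]
    have : ∀ j : Fin p, ∑ i, M i j * A i j ≤ |w j| := by
      intro j
      have h1 : ∑ i, M i j * A i j = w j * ∑ i, M i j * X i j := by
        rw [Finset.mul_sum]
        exact Finset.sum_congr rfl fun i _ => by rw [hAij]; ring
      have h2 : |∑ i, M i j * X i j| ≤ 1 := by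
        calc |∑ i, M i j * X i j| ≤ euclNorm (fun i => M i j) * euclNorm (fun i => X i j) :=
              abs_sum_mul_le _ _
          _ ≤ 1 * 1 := by
              apply mul_le_mul ((col_enorm_le_opNorm M j).trans hM) (le_of_eq (hX j))
                (Real.sqrt_nonneg _) zero_le_one
          _ = 1 := one_mul 1
      calc ∑ i, M i j * A i j ≤ |∑ i, M i j * A i j| := le_abs_self _
        _ = |w j| * |∑ i, M i j * X i j| := by rw [h1, abs_mul]
        _ ≤ |w j| * 1 := by exact mul_le_mul_of_nonneg_left h2 (abs_nonneg _)
        _ = |w j| := mul_one _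
    exact Finset.sum_le_sum fun j _ => this j
  have hbdd : BddAbove {c : ℝ | ∃ M : Matrix (Fin n) (Fin p) ℝ, opNorm M ≤ 1 ∧ c = frobInner M A} :=
    ⟨∑ j : Fin p, |w j|, hub⟩
  constructor
  · -- lower bound
    have hAA : ∑ i, ∑ j, A i j ^ 2 = ∑ j, w j ^ 2 := by
      rw [Finset.sum_comm]
      refine Finset.sum_congr rfl fun j _ => ?_
      calc ∑ i, A i j ^ 2 = ∑ i, X i j ^2 * w j ^2 := by
            refine Finset.sum_congr rfl fun i _ => by rw [hAij]; ring
        _ = w j ^ 2 := by rw [← Finset.sum_mul, hXcol, one_mul]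
    have hfrobA : frob A = euclNorm w := by rw [frob, euclNorm, hAA]
    rcases eq_or_lt_of_le (Real.sqrt_nonneg (∑ j, w j ^2) : (0:ℝ) ≤ euclNorm w) with h0 | hpos
    · -- euclNorm w = 0
      rw [euclNorm, ← h0]
      apply le_csSup hbdd
      refine ⟨0, ?_, ?_⟩
      · have : Matrix.toEuclideanLin (0 : Matrix (Fin n) (Fin p) ℝ) = 0 := map_zero _
        rw [opNorm, this]
        simp
      · rw [frobInner_eq]; simp
    · set t := euclNorm w with ht
      have htpos : 0 < t := hpos
      apply le_csSup hbdd
      refine ⟨t⁻¹ • A, ?_, ?_⟩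
      · calc opNorm (t⁻¹ • A) ≤ frob (t⁻¹ • A) := opNorm_le_frob _
          _ = |t⁻¹| * frob A := frob_smul _ _
          _ = t⁻¹ * t := by rw [abs_of_pos (inv_pos.mpr htpos), hfrobA]
          _ = 1 := inv_mul_cancel₀ (ne_of_gt htpos)
      · rw [frobInner_eq]
        have : ∑ j, ∑ i, (t⁻¹ • A) i j * A i j = t⁻¹ * ∑ i, ∑ j, A i j ^2 := by
          rw [Finset.mul_sum, Finset.sum_comm]
          refine Finset.sum_congr rfl fun i _ => ?_
          rw [Finset.mul_sum]
          refine Finset.sum_congr rfl fun j _ => ?_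
          simp [Matrix.smul_apply, smul_eq_mul]; ring
        rw [this, hAA]
        have hts : t ^ 2 = ∑ j, w j ^2 := by
          rw [ht, euclNorm]; exact Real.sq_sqrt (by positivity)
        rw [← hts, pow_two, inv_mul_cancel_left₀ htpos.ne']
  · exact Real.sSup_le hub (Finset.sum_nonneg fun j _ => abs_nonneg _)
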